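/- Let p be a prime and let K be a reduced commutative ring of characteristic p (i.e., a commutative F_p-algebra with no nonzero nilpotent elements). In the first Weyl algebra A_1(K), for every polynomial f ∈ K[x] one has (∂ + f)^p = ∂^p + d^{p-1}f/dx^{p-1} + f^p. -/

import Mathlib

/-!
STATEMENT 0: Let `p` be a prime and `K` a reduced commutative ring of characteristic `p`.
In the first Weyl algebra `A₁(K)`, for every `f ∈ K[x]` one has
`(∂ + f)^p = ∂^p + d^{p-1}f/dx^{p-1} + f^p`.
-/

noncomputable section

open Polynomial

/-- The defining relation of the first Weyl algebra: `∂·x = x·∂ + 1`. -/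
inductive WeylRel (K : Type*) [CommRing K] :
    FreeAlgebra K (Fin 2) → FreeAlgebra K (Fin 2) → Prop
  | rel : WeylRel K (FreeAlgebra.ι K 1 * FreeAlgebra.ι K 0)
      (FreeAlgebra.ι K 0 * FreeAlgebra.ι K 1 + 1)

/-- The first Weyl algebra `A₁(K) = K⟨x, ∂ | ∂x − x∂ = 1⟩`. -/
abbrev Weyl (K : Type*) [CommRing K] := RingQuot (WeylRel K)

/-- The generator `x` of the first Weyl algebra. -/
def wX (K : Type*) [CommRing K] : Weyl K :=
  RingQuot.mkAlgHom K (WeylRel K) (FreeAlgebra.ι K 0)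

/-- The generator `∂` of the first Weyl algebra. -/
def wD (K : Type*) [CommRing K] : Weyl K :=
  RingQuot.mkAlgHom K (WeylRel K) (FreeAlgebra.ι K 1)

section Aux
variable {S : Type*} [Ring S]
open Polynomial Finset


lemma eq_zero_of_mul_natCast {p i : ℕ} (hp : (p : S) = 0) (hco : Nat.Coprime i p)
    {x : S} (hx : x * (i : S) = 0) : x = 0 := by
  have h : IsCoprime (i : ℤ) (p : ℤ) := by
    rw [Int.isCoprime_iff_gcd_eq_one, Int.gcd_natCast_natCast]; exact hco
  obtain ⟨u, v, huv⟩ := h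
  have h1 : ((u * i + v * p : ℤ) : S) = (i : S) * (u : S) := by
    push_cast
    rw [hp, mul_zero, add_zero]
    exact (Commute.symm (by exact_mod_cast (Nat.cast_commute i ((u : ℤ) : S)))).eq
  calc x = x * ((u * i + v * p : ℤ) : S) := by rw [huv]; simp
    _ = x * (i : S) * (u : S) := by rw [h1, mul_assoc]
    _ = 0 := by rw [hx, zero_mul]

lemma intCast_eq_one_of_dvd {p : ℕ} (hp : (p : S) = 0) {z : ℤ} (h : (p : ℤ) ∣ z - 1) :
    (z : S) = 1 := by
  obtain ⟨t, ht⟩ := h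
  have : z = 1 + p * t := by linarith
  rw [this]
  push_cast
  rw [hp, zero_mul, add_zero]

lemma ad_pow (u v : S) (n : ℕ) :
    (fun w => u * w - w * u)^[n] v
      = ∑ k ∈ range (n+1), ((-1 : ℤ)^(n-k) * (n.choose k) : ℤ) • (u^k * v * u^(n-k)) := by
  induction n with
  | zero => simp
  | succ n ih =>
    rw [Function.iterate_succ_apply', ih]
    simp only [Finset.mul_sum, Finset.sum_mul, mul_smul_comm, smul_mul_assoc]
    have lhs1 : ∀ k, u * (u^k * v * u^(n-k)) = u^(k+1) * v * u^(n-k) := by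
      intro k; rw [← mul_assoc, ← mul_assoc, ← pow_succ']
    have lhs2 : ∀ k, (u^k * v * u^(n-k)) * u = u^k * v * u^(n-k+1) := by
      intro k; simp only [mul_assoc, pow_succ]
    simp only [lhs1, lhs2, Nat.succ_sub_succ]
    have A : ∑ x ∈ range (n+1), ((-1:ℤ)^(n-x) * (n.choose x) : ℤ) • (u^x * v * u^(n-x+1))
        = (∑ x ∈ range n, ((-1:ℤ)^(n-(x+1)) * (n.choose (x+1)) : ℤ) • (u^(x+1) * v * u^(n-x)))
          + ((-1:ℤ)^n : ℤ) • (u^0 * v * u^(n+1)) := by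
      rw [Finset.sum_range_succ']
      congr 1
      · apply Finset.sum_congr rfl
        intro x hx
        have : n - (x+1) + 1 = n - x := by
          have := Finset.mem_range.mp hx; omega
        rw [this]
      · norm_num
    have B : ∑ x ∈ range (n+1), ((-1:ℤ)^(n-x) * (n.choose x) : ℤ) • (u^(x+1) * v * u^(n-x))
        = (∑ x ∈ range n, ((-1:ℤ)^(n-x) * (n.choose x) : ℤ) • (u^(x+1) * v * u^(n-x)))
          + (1 : ℤ) • (u^(n+1) * v * u^0) := by
      rw [Finset.sum_range_succ]
      norm_num
    have C : ∑ k ∈ range (n+1+1), ((-1:ℤ)^(n+1-k) * ((n+1).choose k) : ℤ) • (u^k * v * u^(n+1-k))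
        = (∑ k ∈ range n, ((-1:ℤ)^(n-k) * ((n+1).choose (k+1)) : ℤ) • (u^(k+1) * v * u^(n-k)))
          + (1 : ℤ) • (u^(n+1) * v * u^0)
          + ((-1:ℤ)^(n+1) : ℤ) • (u^0 * v * u^(n+1)) := by
      rw [Finset.sum_range_succ', Finset.sum_range_succ]
      simp only [Nat.succ_sub_succ]
      norm_num
    rw [A, B, C]
    have key : ∀ x ∈ range n,
        ((-1:ℤ)^(n-x) * (n.choose x) : ℤ) • (u^(x+1) * v * u^(n-x))
          - ((-1:ℤ)^(n-(x+1)) * (n.choose (x+1)) : ℤ) • (u^(x+1) * v * u^(n-x))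
        = ((-1:ℤ)^(n-x) * ((n+1).choose (x+1)) : ℤ) • (u^(x+1) * v * u^(n-x)) := by
      intro x hx
      have hxn := Finset.mem_range.mp hx
      rw [← sub_smul]
      congr 1
      have h1 : n - x = (n - (x+1)) + 1 := by omega
      rw [Nat.choose_succ_succ, h1, pow_succ]
      push_cast
      ring
    have key2 : ∀ x ∈ range n, ((-1:ℤ)^(n-x) * ((n+1).choose (x+1)) : ℤ) • (u^(x+1) * v * u^(n-x))
        = ((-1:ℤ)^(n-x) * ((n+1).choose (x+1)) : ℤ) • (u^(x+1) * v * u^(n-x)) := fun _ _ => rfl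
    have hsum : (∑ x ∈ range n, ((-1:ℤ)^(n-x) * (n.choose x) : ℤ) • (u^(x+1) * v * u^(n-x)))
        - (∑ x ∈ range n, ((-1:ℤ)^(n-(x+1)) * (n.choose (x+1)) : ℤ) • (u^(x+1) * v * u^(n-x)))
        = ∑ k ∈ range n, ((-1:ℤ)^(n-k) * ((n+1).choose (k+1)) : ℤ) • (u^(k+1) * v * u^(n-k)) := by
      rw [← Finset.sum_sub_distrib]
      exact Finset.sum_congr rfl key
    have hneg : ((-1:ℤ)^(n+1) : ℤ) • (u^0 * v * u^(n+1)) = -(((-1:ℤ)^n : ℤ) • (u^0 * v * u^(n+1))) := by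
      rw [← neg_smul, pow_succ]
      norm_num
    rw [hneg, ← hsum]
    abel
open Polynomial Finset


-- C(p-1, k) ≡ (-1)^k mod p
lemma choose_pred_mod (p : ℕ) (hp : p.Prime) : ∀ k, k ≤ p - 1 →
    (((p-1).choose k : ℕ) : ZMod p) = (-1)^k := by
  intro k
  induction k with
  | zero => simp
  | succ k ih =>
    intro hk
    have hk' : k ≤ p - 1 := by omega
    have hlt : k + 1 < p := by have := hp.two_le; omega
    have pascal : (p-1).choose k + (p-1).choose (k+1) = p.choose (k+1) := by
      have h1 : p - 1 + 1 = p := by have := hp.two_le; omega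
      have h2 := Nat.choose_succ_succ (p-1) k
      simp only [Nat.succ_eq_add_one] at h2
      rw [h1] at h2
      omega
    have hc0 : ((p.choose (k+1) : ℕ) : ZMod p) = 0 :=
      (ZMod.natCast_eq_zero_iff _ p).mpr (hp.dvd_choose_self (by omega) hlt)
    have h2 : (((p-1).choose k : ℕ) : ZMod p) + (((p-1).choose (k+1) : ℕ) : ZMod p) = 0 := by
      rw [← Nat.cast_add, pascal, hc0]
    rw [ih hk'] at h2
    rw [pow_succ]
    linear_combination h2

lemma jac_coeff_one {p : ℕ} (hp : p.Prime) (hpS : (p : S) = 0) {k : ℕ} (hk : k ≤ p - 1) :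
    (((-1 : ℤ)^(p-1-k) * ((p-1).choose k) : ℤ) : S) = 1 := by
  apply intCast_eq_one_of_dvd hpS
  rw [← (ZMod.intCast_zmod_eq_zero_iff_dvd _ p)]
  push_cast
  rw [choose_pred_mod p hp k hk, ← pow_add]

  have : p - 1 - k + k = p - 1 := by omega
  rw [this]
  rcases hp.eq_two_or_odd' with h2 | hodd
  · subst h2; decide
  · have : Even (p - 1) := by
      rcases hodd with ⟨m, hm⟩
      exact ⟨m, by omega⟩
    rw [this.neg_one_pow]
    ring

lemma ad_pow_prime {p : ℕ} (hp : p.Prime) (hpS : (p : S) = 0) (u v : S) :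
    (fun w => u * w - w * u)^[p-1] v = ∑ k ∈ range p, u^k * v * u^(p-1-k) := by
  have h1 : p - 1 + 1 = p := by have := hp.two_le; omega
  rw [ad_pow, h1]
  apply Finset.sum_congr rfl
  intro k hk
  have hk' : k ≤ p - 1 := by have := Finset.mem_range.mp hk; omega
  rw [zsmul_eq_mul, jac_coeff_one hp hpS hk', one_mul]

lemma derivative_pow_sum (u : S[X]) (n : ℕ) :
    derivative (u^n) = ∑ j ∈ range n, u^j * derivative u * u^(n-1-j) := by
  induction n with
  | zero => simp
  | succ n ih =>
    rw [pow_succ', derivative_mul, ih, Finset.mul_sum]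
    rw [Finset.sum_range_succ' (fun j => u^j * derivative u * u^(n+1-1-j)) n]
    simp only [pow_zero, one_mul, Nat.add_sub_cancel, Nat.succ_sub_succ, Nat.sub_zero]
    rw [add_comm]
    congr 1
    apply Finset.sum_congr rfl
    intro j hj
    rw [← mul_assoc, ← mul_assoc, ← pow_succ']
    congr 2
    have := Finset.mem_range.mp hj
    omega
lemma poly_step (a c d : S) (m : ℕ) :
    (C a * X + C c) * (C d * X^m) - (C d * X^m) * (C a * X + C c)
      = C (a*d - d*a) * X^(m+1) + C (c*d - d*c) * X^m := by
  have hX : (C a * X : S[X]) = monomial 1 a := by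
    simpa using (C_mul_X_pow_eq_monomial (n := 1) (a := a))
  rw [hX, C_mul_X_pow_eq_monomial, C_mul_X_pow_eq_monomial, C_mul_X_pow_eq_monomial,
    ← monomial_zero_left]
  rw [add_mul, mul_add]
  simp only [monomial_mul_monomial, map_sub]
  have h1 : 1 + m = m + 1 := by omega
  rw [h1, add_zero, zero_add]
  abel

lemma key_identity {p : ℕ} (hp : p.Prime) (hpS : (p : S) = 0)
    (a : S) (b : ℕ → S) (hab : ∀ k, a * b k - b k * a = b (k+1))
    (hbb : ∀ k, b 0 * b k = b k * b 0) :
    (a + b 0)^p = a^p + b (p-1) + (b 0)^p := by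
  obtain ⟨q, rfl⟩ : ∃ q, p = q + 2 := ⟨p - 2, by have := hp.two_le; omega⟩
  have hq1 : q + 2 - 1 = q + 1 := by omega
  rw [hq1]
  set u : S[X] := C a * X + C (b 0) with hu
  have hiter : ∀ m, (fun w => u * w - w * u)^[m+1] (C a) = -(C (b (m+1)) * X^m) := by
    intro m
    induction m with
    | zero =>
      show u * C a - C a * u = _
      have h := poly_step (S := S) a (b 0) a 0
      rw [pow_zero, mul_one, sub_self, map_zero, zero_mul, zero_add,
        show b 0 * a - a * b 0 = -(b 1) by rw [← hab 0]; abel, map_neg] at h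
      simp only [hu]
      rw [h]
      simp
    | succ m ih =>
      rw [Function.iterate_succ_apply', ih]
      show u * -(C (b (m+1)) * X^m) - -(C (b (m+1)) * X^m) * u = _
      have : u * -(C (b (m+1)) * X^m) - -(C (b (m+1)) * X^m) * u
          = -(u * (C (b (m+1)) * X^m) - (C (b (m+1)) * X^m) * u) := by
        rw [mul_neg, neg_mul]; abel
      rw [this, hu, poly_step a (b 0) (b (m+1)) m, hab (m+1),
        show b 0 * b (m+1) - b (m+1) * b 0 = 0 by rw [hbb (m+1)]; abel,
        map_zero, zero_mul, add_zero]
  -- derivative of u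
  have hdu : derivative u = C a := by
    rw [hu]
    simp
  -- derivative of u^p
  have hder : derivative (u^(q+2)) = -(C (b (q+1)) * X^q) := by
    rw [derivative_pow_sum u (q+2), hdu]
    have := ad_pow_prime (S := S[X]) hp (by
      rw [← map_natCast (C : S →+* S[X]) (q+2), hpS, map_zero]) u (C a)
    rw [hq1] at this
    rw [show (∑ j ∈ Finset.range (q+2), u^j * C a * u^(q+2-1-j))
        = ∑ j ∈ Finset.range (q+2), u^j * C a * u^(q+1-j) by
        apply Finset.sum_congr rfl; intro j hj; rw [hq1]]
    rw [← this]
    have h2 : q + 1 = q + 1 := rfl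
    exact hiter q
  -- degree bounds and coefficients
  have hdeg : natDegree u ≤ 1 := by
    rw [hu]
    refine le_trans (natDegree_add_le _ _) (max_le ?_ ?_)
    · exact le_trans natDegree_mul_le (by simp [natDegree_X_le])
    · simp
  have hhigh : ∀ n m : ℕ, n < m → coeff (u^n) m = 0 := by
    intro n m hnm
    apply coeff_eq_zero_of_natDegree_lt
    calc natDegree (u^n) ≤ n * natDegree u := natDegree_pow_le
      _ ≤ n * 1 := Nat.mul_le_mul_left n hdeg
      _ < m := by omega
  have expand : ∀ w : S[X], u * w = C a * (X * w) + C (b 0) * w := by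
    intro w; rw [hu, add_mul, mul_assoc]
  have htop : ∀ n, coeff (u^n) n = a^n := by
    intro n
    induction n with
    | zero => simp
    | succ n ih =>
      rw [pow_succ', expand, coeff_add, coeff_C_mul, coeff_C_mul, coeff_X_mul, ih,
        hhigh n (n+1) (by omega), mul_zero, add_zero, ← pow_succ']
  have hcu0 : coeff u 0 = b 0 := by rw [hu]; simp
  have hbot : ∀ n, coeff (u^n) 0 = (b 0)^n := by
    intro n
    induction n with
    | zero => simp
    | succ n ih =>
      rw [pow_succ', mul_coeff_zero, ih, hcu0, ← pow_succ']
  have hcoeff_mid : ∀ n : ℕ, n < q + 1 → n ≠ q → coeff (u^(q+2)) (n+1) = 0 := by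
    intro n hn hnq
    have h1 : coeff (derivative (u^(q+2))) n = 0 := by
      rw [hder]
      simp [coeff_X_pow, hnq]
    rw [coeff_derivative] at h1
    rw [show ((n : S) + 1) = ((n+1 : ℕ) : S) from (Nat.cast_add_one n).symm] at h1
    refine eq_zero_of_mul_natCast (p := q+2) hpS ?_ h1
    refine Nat.Coprime.symm (hp.coprime_iff_not_dvd.mpr ?_)
    intro hdvd
    have := Nat.le_of_dvd (by omega) hdvd
    omega
  have hcoeff_q1 : coeff (u^(q+2)) (q+1) = b (q+1) := by
    have h1 : coeff (derivative (u^(q+2))) q = -(b (q+1)) := by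
      rw [hder]
      simp [coeff_X_pow]
    rw [coeff_derivative] at h1
    have hc : ((q : S) + 1) = -1 := by
      have h := hpS
      push_cast at h
      refine eq_neg_of_add_eq_zero_left ?_
      rw [add_assoc, one_add_one_eq_two] at *
      exact h
    rw [hc, mul_neg_one, neg_inj] at h1
    exact h1
  have hQ : u^(q+2) = C ((b 0)^(q+2)) + C (b (q+1)) * X^(q+1) + C (a^(q+2)) * X^(q+2) := by
    ext n
    simp only [coeff_add, coeff_C_mul, coeff_X_pow, coeff_C]
    rcases eq_or_ne n 0 with rfl | hn0
    · rw [hbot, if_pos rfl, if_neg (by omega), if_neg (by omega)]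
      simp
    rcases eq_or_ne n (q+2) with rfl | hntop
    · rw [htop, if_neg (by omega), if_neg (by omega), if_pos rfl]
      simp
    rcases eq_or_ne n (q+1) with rfl | hmid
    · rw [hcoeff_q1, if_neg (by omega), if_pos rfl, if_neg (by omega)]
      simp
    rw [if_neg hn0, if_neg hmid, if_neg hntop]
    by_cases hlt : n < q + 2
    · obtain ⟨m, rfl⟩ : ∃ m, n = m + 1 := ⟨n - 1, by omega⟩
      rw [hcoeff_mid m (by omega) (by omega)]
      simp
    · rw [hhigh (q+2) n (by omega)]
      simp
  set ψ : S[X] →+* S := eval₂RingHom' (RingHom.id S) (1 : S) (fun r => Commute.one_right _) with hψ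
  have happ : ∀ g : S[X], ψ g = eval₂ (RingHom.id S) 1 g := fun g => rfl
  have hψu : ψ u = a + b 0 := by
    rw [hu, happ]
    simp
  have hψC : ∀ c : S, ψ (C c) = c := fun c => by rw [happ]; simp
  have hψX : ψ X = 1 := by rw [happ]; simp
  have final := congrArg ψ hQ
  simp only [map_pow, map_add, map_mul, hψu, hψC, hψX, one_pow, mul_one] at final
  rw [final]
  abel
end Aux

section WeylFacts
variable (K : Type*) [CommRing K]variable (K : Type*) [CommRing K]


lemma weyl_rel : wD K * wX K = wX K * wD K + 1 := by
  have h := RingQuot.mkAlgHom_rel K (WeylRel.rel (K := K))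
  simpa only [wD, wX, map_mul, map_add, map_one] using h

lemma wD_pow_X : ∀ n : ℕ, wD K * wX K ^ (n+1) = wX K ^ (n+1) * wD K + (n+1) • wX K ^ n := by
  intro n
  induction n with
  | zero => simpa using weyl_rel K
  | succ n ih =>
    have : wD K * wX K ^ (n+2) = (wD K * wX K ^ (n+1)) * wX K := by
      rw [mul_assoc, ← pow_succ]
    rw [this, ih, add_mul, smul_mul_assoc, ← pow_succ, mul_assoc, weyl_rel K, mul_add,
      ← mul_assoc, ← pow_succ, mul_one, succ_nsmul (wX K ^ (n+1)) (n+1)]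
    abel

lemma weyl_comm (g : K[X]) :
    wD K * aeval (wX K) g = aeval (wX K) g * wD K + aeval (wX K) (derivative g) := by
  induction g using Polynomial.induction_on' with
  | add f g hf hg =>
    simp only [map_add, mul_add, add_mul] at *
    rw [hf, hg]; abel
  | monomial n k =>
    rcases n with _ | m
    · simp [aeval_monomial, Algebra.commutes]
    · rw [aeval_monomial, derivative_monomial]
      simp only [Nat.add_sub_cancel, Nat.cast_add, Nat.cast_one, aeval_monomial]
      rw [← mul_assoc, (Algebra.commutes k (wD K)).symm, mul_assoc, wD_pow_X K m,
        mul_add, ← mul_assoc]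
      congr 1
      have : (algebraMap K (Weyl K)) ((m : K) + 1) = ((m + 1 : ℕ) : Weyl K) := by
        push_cast
        simp
      rw [map_mul, nsmul_eq_mul, this, mul_assoc]

end WeylFacts

/-- A polynomial `f ∈ K[x]` is regarded as the element `f(x)` of the Weyl algebra via
`Polynomial.aeval (wX K)`. -/
theorem statement0 (p : ℕ) (hp : p.Prime) (K : Type*) [CommRing K] [IsReduced K] [CharP K p]
    (f : Polynomial K) :
    (wD K + aeval (wX K) f) ^ p =
      wD K ^ p + aeval (wX K) (derivative^[p - 1] f) + aeval (wX K) f ^ p := by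
  have hpS : ((p : ℕ) : Weyl K) = 0 := by
    rw [← map_natCast (algebraMap K (Weyl K)) p, CharP.cast_eq_zero K p, map_zero]
  have key := key_identity (S := Weyl K) hp hpS (wD K)
    (fun k => aeval (wX K) (derivative^[k] f)) ?_ ?_
  · simpa using key
  · intro k
    beta_reduce
    rw [weyl_comm K (derivative^[k] f), Function.iterate_succ_apply']
    abel
  · intro k
    beta_reduce
    rw [← map_mul, ← map_mul, mul_comm]
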